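/- Equivalence of periodicity and closedness of the orbit (equivalences (1.51) of the paper): Let ζ ⊆ ℝ^n be compact and let Ψ : ζ × ℝ → ζ be a jointly continuous flow, i.e. Ψ(x,0) = x and Ψ(Ψ(x,s),t) = Ψ(x,s+t) for all x ∈ ζ and s, t ∈ ℝ. Then for every z ∈ ζ the following are equivalent: (i) there exists T ≠ 0 with Ψ(z,T) = z; (ii) the orbit Ψ(z,ℝ) := {Ψ(z,t) : t ∈ ℝ} is a closed subset of ℝ^n. -/

import Mathlib

open Filter Topology Metric Set

/-- **Equivalence of periodicity and closedness of the orbit (equivalences (1.51)).**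
For a jointly continuous flow on a compact set ζ ⊆ ℝ^n, a state is periodic iff its
orbit is a closed subset of ℝ^n. -/
theorem periodic_iff_orbit_closed {n : ℕ} (ζ : Set (EuclideanSpace ℝ (Fin n)))
    (hcomp : IsCompact ζ)
    (Ψ : EuclideanSpace ℝ (Fin n) → ℝ → EuclideanSpace ℝ (Fin n))
    (hmaps : ∀ x ∈ ζ, ∀ t : ℝ, Ψ x t ∈ ζ)
    (hzero : ∀ x ∈ ζ, Ψ x 0 = x)
    (hgroup : ∀ x ∈ ζ, ∀ s t : ℝ, Ψ (Ψ x s) t = Ψ x (s + t))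
    (hcont : ContinuousOn (fun p : (EuclideanSpace ℝ (Fin n)) × ℝ => Ψ p.1 p.2)
      (ζ ×ˢ (Set.univ : Set ℝ))) :
    ∀ z ∈ ζ, ((∃ T : ℝ, T ≠ 0 ∧ Ψ z T = z) ↔ IsClosed (Set.range (Ψ z))) := by
  intro z hz
  set φ : ℝ → EuclideanSpace ℝ (Fin n) := Ψ z with hφdef
  -- continuity of the orbit map
  have hφcont : Continuous φ := by
    rw [← continuousOn_univ]
    have : ContinuousOn ((fun p : (EuclideanSpace ℝ (Fin n)) × ℝ => Ψ p.1 p.2) ∘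
        (fun t : ℝ => (z, t))) univ := by
      apply hcont.comp (Continuous.continuousOn (by continuity))
      intro t _
      exact ⟨hz, mem_univ t⟩
    exact this
  have hrange : range φ ⊆ ζ := by
    rintro _ ⟨t, rfl⟩; exact hmaps z hz t
  -- continuity of time-a shift maps
  have hshift : ∀ a : ℝ, ContinuousOn (fun x => Ψ x a) ζ := by
    intro a
    have : ContinuousOn ((fun p : (EuclideanSpace ℝ (Fin n)) × ℝ => Ψ p.1 p.2) ∘
        (fun x => (x, a))) ζ := by
      apply hcont.comp (Continuous.continuousOn (by continuity))
      intro x hx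
      exact ⟨hx, mem_univ a⟩
    exact this
  constructor
  · -- periodic ⇒ closed
    rintro ⟨T, hT0, hT⟩
    have hper : Function.Periodic φ T := by
      intro t
      have h1 := hgroup z hz T t
      rw [show Ψ z T = z from hT] at h1
      simpa [hφdef, add_comm] using h1.symm
    have himg : φ '' uIcc 0 (0 + T) = range φ := hper.image_uIcc hT0 0
    rw [← himg]
    exact (isCompact_uIcc.image hφcont).isClosed
  · -- closed ⇒ periodic
    intro hclosed
    by_contra hnp
    push_neg at hnp
    -- non-periodicity gives injectivity
    have hinj : Function.Injective φ := by
      intro s t hst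
      by_contra hne
      apply hnp (s - t) (sub_ne_zero.mpr hne)
      have h1 : Ψ (φ s) (-t) = φ (s - t) := by
        rw [hφdef, hgroup z hz s (-t)]; ring_nf
      have h2 : Ψ (φ t) (-t) = z := by
        rw [hφdef, hgroup z hz t (-t)]; simp [hzero z hz]
      rw [hst, h2] at h1
      exact h1.symm
    have hO : IsCompact (range φ) := hcomp.of_isClosed_subset hclosed hrange
    -- recurrence: there's a sequence of times → ∞ whose orbit points → z
    obtain ⟨q, ⟨s₀, hs₀⟩, σ, hσmono, hσtend⟩ :=
      hO.tendsto_subseq (x := fun m : ℕ => φ m) (fun m => mem_range_self _)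
    subst hs₀
    have hmemζ : ∀ j, φ (σ j) ∈ ζ := fun j => hrange (mem_range_self _)
    have htendW : Tendsto (fun j => φ (σ j)) atTop (𝓝[ζ] (φ s₀)) := by
      refine tendsto_nhdsWithin_of_tendsto_nhds_of_eventually_within _ hσtend ?_
      exact Eventually.of_forall hmemζ
    have hlim : Tendsto (fun j => φ ((σ j : ℝ) - s₀)) atTop (𝓝 z) := by
      have hc := ((hshift (-s₀)).continuousWithinAt (hrange (mem_range_self s₀))).tendsto
      have := hc.comp htendW
      have heq : ∀ j, Ψ (φ (σ j)) (-s₀) = φ ((σ j : ℝ) - s₀) := by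
        intro j
        rw [hφdef, hgroup z hz (σ j) (-s₀)]; ring_nf
      have hz' : Ψ (φ s₀) (-s₀) = z := by
        rw [hφdef, hgroup z hz s₀ (-s₀)]; simp [hzero z hz]
      rw [hz'] at this
      exact this.congr heq
    -- Baire category on the compact orbit
    have : Nonempty (range φ) := ⟨⟨z, 0, hzero z hz⟩⟩
    have : CompactSpace (range φ) := isCompact_iff_compactSpace.mp hO
    obtain ⟨k, p, hp⟩ := nonempty_interior_of_iUnion_of_closed
      (X := range φ) (f := fun k : ℕ => Subtype.val ⁻¹' (φ '' Icc (-(k:ℝ)) k))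
      (fun k => ((isCompact_Icc.image hφcont).isClosed).preimage continuous_subtype_val)
      (by
        apply eq_univ_iff_forall.mpr
        rintro ⟨x, t, rfl⟩
        refine mem_iUnion.mpr ⟨⌈|t|⌉₊, ?_⟩
        refine mem_preimage.mpr ⟨t, ?_, rfl⟩
        have := Nat.le_ceil |t|
        constructor
        · linarith [neg_abs_le t]
        · linarith [le_abs_self t])
    obtain ⟨U, hU, hUsub⟩ := (mem_nhds_subtype _ p _).mp (mem_interior_iff_mem_nhds.mp hp)
    obtain ⟨t₀, ht₀⟩ := p.2
    -- the neighborhood of z that traps orbit times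
    have hVz : {x | Ψ x t₀ ∈ U} ∈ 𝓝[ζ] z := by
      have htd := (hshift t₀).continuousWithinAt hz
      rw [ContinuousWithinAt, show Ψ z t₀ = ↑p from ht₀] at htd
      exact htd hU
    obtain ⟨W, hWnhds, hWsub⟩ := mem_nhdsWithin_iff_exists_mem_nhds_inter.mp hVz
    -- trapped times are bounded
    have hbound : ∀ s : ℝ, φ s ∈ W → (s : ℝ) ≤ k - t₀ := by
      intro s hsW
      have hsζ : φ s ∈ ζ := hrange (mem_range_self s)
      have hU' : Ψ (φ s) t₀ ∈ U := hWsub ⟨hsW, hsζ⟩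
      have heq : Ψ (φ s) t₀ = φ (s + t₀) := by
        rw [hφdef, hgroup z hz s t₀]
      have hmem : φ (s + t₀) ∈ range φ := mem_range_self _
      have : (⟨φ (s + t₀), hmem⟩ : range φ) ∈
          Subtype.val ⁻¹' (φ '' Icc (-(k:ℝ)) k) := by
        apply hUsub
        simpa [heq] using hU'
      obtain ⟨u, hu, hueq⟩ := this
      have := hinj hueq
      have : u = s + t₀ := this
      have h2 := hu.2
      linarith [this ▸ h2]
    -- contradiction: times σ j - s₀ → ∞ but trapped
    have hWev : ∀ᶠ j in atTop, φ ((σ j : ℝ) - s₀) ∈ W :=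
      hlim.eventually (eventually_mem_nhds_iff.mpr hWnhds |>.mono fun x h => by
        simpa using mem_of_mem_nhds h)
    have htimes : Tendsto (fun j => (σ j : ℝ) - s₀) atTop atTop := by
      apply tendsto_atTop_add_const_right
      exact tendsto_natCast_atTop_atTop.comp hσmono.tendsto_atTop
    have hbig : ∀ᶠ j in atTop, (k : ℝ) - t₀ < (σ j : ℝ) - s₀ :=
      htimes.eventually_gt_atTop _
    obtain ⟨j, hj1, hj2⟩ := (hWev.and hbig).exists
    exact absurd (hbound _ hj1) (not_le.mpr hj2)
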